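/- Let α ≥ 2 and κ ≥ ω be cardinals, and let λ and μ be cardinals with α ≤ λ ≤ (α^{<κ})^{<κ} and κ ≤ μ ≤ 2^{((α^{<κ})^{<κ})}. Then: (a) α^{<κ} ≤ d(((D(λ))^μ)_κ) ≤ (α^{<κ})^{<κ}; and (b) if κ is regular or some cardinal ν < κ satisfies α^ν = α^{<κ}, then d(((D(λ))^μ)_κ) = α^{<κ}. -/

import Mathlib

open Cardinal TopologicalSpace Set

universe u

/-- The `κ`-box topology on a product of topological spaces: generated by the boxes
`Π i, U i` with each `U i` open and fewer than `κ` coordinates restricted. -/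
def boxTopology (κ : Cardinal.{u}) {ι : Type u} (X : ι → Type u)
    [∀ i, TopologicalSpace (X i)] : TopologicalSpace (∀ i, X i) :=
  TopologicalSpace.generateFrom
    {S | ∃ U : ∀ i, Set (X i), (∀ i, IsOpen (U i)) ∧
      #{i | U i ≠ Set.univ} < κ ∧ S = Set.pi Set.univ U}

/-- The density character of a topological space: the least cardinality of a dense subset
(finite values allowed). -/
noncomputable def dens (X : Type u) [TopologicalSpace X] : Cardinal.{u} :=
  sInf {c | ∃ D : Set X, Dense D ∧ #D = c}

namespace Stmt10Aux

lemma le_self_powerlt (a : Cardinal.{u}) {κ : Cardinal.{u}} (hκ : 1 < κ) : a ≤ a ^< κ := by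
  simpa using le_powerlt a hκ

lemma kappa_le_powerlt {a κ : Cardinal.{u}} (ha : 2 ≤ a) (hκ : ℵ₀ ≤ κ) : κ ≤ a ^< κ := by
  refine le_of_forall_lt fun c hc => ?_
  calc c < 2 ^ c := cantor c
    _ ≤ a ^ c := power_le_power_right ha
    _ ≤ a ^< κ := le_powerlt a hc

lemma exists_mk_Iio_eq {κ c : Cardinal.{u}} (hc : c < κ) :
    ∃ o : κ.ord.ToType, #{x : κ.ord.ToType // x < o} = c := by
  haveI : IsWellOrder κ.ord.ToType (· < ·) := isWellOrder_lt
  have h2 : c.ord < Ordinal.type (α := κ.ord.ToType) (· < ·) := by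
    rw [Ordinal.type_toType]; rwa [Cardinal.ord_lt_ord]
  refine ⟨Ordinal.enum (α := κ.ord.ToType) (· < ·) ⟨c.ord, h2⟩, ?_⟩
  have h3 := Ordinal.card_typein (r := ((· < ·) : κ.ord.ToType → κ.ord.ToType → Prop))
    (Ordinal.enum (α := κ.ord.ToType) (· < ·) ⟨c.ord, h2⟩)
  rw [Ordinal.typein_enum, Cardinal.card_ord] at h3
  exact h3.symm

lemma mk_small_subsets_le {κ : Cardinal.{u}} (hκ : ℵ₀ ≤ κ) (K : Type u) :
    #{S : Set K // #S < κ} ≤ κ * ((#K) ^< κ) + 1 := by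
  classical
  set Z := Σ o : κ.ord.ToType, ({x : κ.ord.ToType // x < o} → K) with hZ
  have hκ0 : (0:Cardinal) < κ := lt_of_lt_of_le (by exact_mod_cast aleph0_pos) hκ
  set Φ : Option Z → {S : Set K // #S < κ} := fun z =>
    match z with
    | none => ⟨∅, by simpa using hκ0⟩
    | some ⟨o, f⟩ => ⟨range f, lt_of_le_of_lt mk_range_le (Cardinal.mk_Iio_ord_toType o)⟩
    with hΦ
  have hsurj : Function.Surjective Φ := by
    rintro ⟨S, hS⟩
    rcases eq_empty_or_nonempty S with rfl | hne
    · exact ⟨none, rfl⟩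
    · obtain ⟨o, ho⟩ := exists_mk_Iio_eq (κ := κ) (c := #S) hS
      obtain ⟨e⟩ := Cardinal.eq.mp ho
      refine ⟨some ⟨o, fun x => (e x : K)⟩, ?_⟩
      apply Subtype.ext
      show range (fun x => (e x : K)) = S
      have : (fun x => (e x : K)) = (Subtype.val : S → K) ∘ e := rfl
      rw [this, Set.range_comp, Equiv.range_eq_univ, Set.image_univ, Subtype.range_coe]
  calc #{S : Set K // #S < κ} ≤ #(Option Z) := mk_le_of_surjective hsurj
    _ = #Z + 1 := mk_option
    _ ≤ κ * ((#K) ^< κ) + 1 := by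
        gcongr
        rw [hZ, mk_sigma]
        calc (Cardinal.sum fun o : κ.ord.ToType => #({x : κ.ord.ToType // x < o} → K))
            ≤ Cardinal.sum fun _ : κ.ord.ToType => (#K) ^< κ := by
              apply sum_le_sum
              intro o
              rw [← power_def]
              exact le_powerlt _ (Cardinal.mk_Iio_ord_toType o)
          _ = κ * ((#K) ^< κ) := by rw [sum_const', Cardinal.mk_ord_toType]

lemma powerlt_power_le_of_regular {κ b : Cardinal.{u}} (hreg : κ.IsRegular) (hb : 2 ≤ b)
    {ν : Cardinal.{u}} (hν : ν < κ) : (b ^< κ) ^ ν ≤ b ^< κ := by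
  classical
  have hκ : ℵ₀ ≤ κ := hreg.aleph0_le
  have hB : κ ≤ b ^< κ := kappa_le_powerlt hb hκ
  have hBinf : ℵ₀ ≤ b ^< κ := hκ.trans hB
  rcases lt_or_ge ν ℵ₀ with hfin | hinf
  · obtain ⟨n, rfl⟩ := lt_aleph0.mp hfin
    exact power_nat_le hBinf
  · have hℵκ : ℵ₀ < κ := lt_of_le_of_lt hinf hν
    haveI : IsWellOrder κ.ord.ToType (· < ·) := isWellOrder_lt
    set B := b ^< κ with hBdef
    set Y := Quotient.out b with hY
    set Z := Σ o : κ.ord.ToType, ({x : κ.ord.ToType // x < o} → Y) with hZdef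
    have hZle : #Z ≤ B := by
      rw [hZdef, mk_sigma]
      calc (Cardinal.sum fun o : κ.ord.ToType => #({x : κ.ord.ToType // x < o} → Y))
          ≤ Cardinal.sum fun _ : κ.ord.ToType => B := by
            refine sum_le_sum _ _ fun o => ?_
            rw [← power_def, mk_out]
            exact le_powerlt _ (Cardinal.mk_Iio_ord_toType o)
        _ = κ * B := by rw [sum_const', Cardinal.mk_ord_toType]
        _ ≤ B := by rw [mul_eq_max hκ hBinf, max_eq_right hB]
    have hZge : B ≤ #Z := by
      rw [hBdef, powerlt_le]
      intro c hc
      obtain ⟨o, ho⟩ := exists_mk_Iio_eq hc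
      have h1 : b ^ c = #({x : κ.ord.ToType // x < o} → Y) := by
        rw [← power_def, mk_out, ho]
      rw [h1]
      refine mk_le_of_injective
        (f := fun (f : {x : κ.ord.ToType // x < o} → Y) => (⟨o, f⟩ : Z)) ?_
      intro f g hfg
      exact eq_of_heq (Sigma.mk.inj_iff.mp hfg).2
    have hZB : #Z = B := le_antisymm hZle hZge
    set N := Quotient.out ν with hN
    have hpow : B ^ ν = #(N → Z) := by rw [← power_def, hZB, mk_out]
    set W := Σ o : κ.ord.ToType, (N → {z : Z // z.1 < o}) with hWdef
    set Θ : W → (N → Z) := fun w n => (w.2 n).1 with hΘ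
    have hΘs : Function.Surjective Θ := by
      intro f
      have hcof : #(range fun n => (f n).1) <
          (Ordinal.type ((· < ·) : κ.ord.ToType → κ.ord.ToType → Prop)).cof := by
        rw [Ordinal.type_toType, hreg.cof_eq]
        exact lt_of_le_of_lt mk_range_le (by rwa [mk_out])
      obtain ⟨o, ho⟩ : ∃ o : κ.ord.ToType, ∀ b ∈ range (fun n => (f n).1), b < o := by
        by_contra hcon
        push_neg at hcon
        have hc := Order.cof_le (α := κ.ord.ToType) (s := range fun n => (f n).1) hcon
        rw [← Ordinal.cof_type] at hc
        exact absurd hcof (not_lt.mpr hc)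
      exact ⟨⟨o, fun n => ⟨f n, ho _ (mem_range_self n)⟩⟩, rfl⟩
    have hWle : #W ≤ B := by
      rw [hWdef, mk_sigma]
      have key : ∀ o : κ.ord.ToType, #(N → {z : Z // z.1 < o}) ≤ B := by
        intro o
        set m := #({x : κ.ord.ToType // x < o}) ⊔ ℵ₀ with hm
        have hmκ : m < κ := max_lt (Cardinal.mk_Iio_ord_toType o) hℵκ
        have hminf : ℵ₀ ≤ m := le_max_right _ _
        have hb0 : b ≠ 0 := by positivity
        have hinj : #({z : Z // z.1 < o}) ≤ b ^ m := by
          have step1 : #({z : Z // z.1 < o}) ≤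
              #({x : κ.ord.ToType // x < o} × ({x : κ.ord.ToType // x < o} → Option Y)) := by
            apply mk_le_of_injective (f := fun z =>
              ((⟨z.1.1, z.2⟩ : {x : κ.ord.ToType // x < o}),
                fun x => if hx : x.1 < z.1.1 then some (z.1.2 ⟨x.1, hx⟩) else none))
            rintro ⟨⟨o₁, g₁⟩, h₁⟩ ⟨⟨o₂, g₂⟩, h₂⟩ heq
            obtain ⟨heq1, heq2⟩ := Prod.mk.injEq _ _ _ _ ▸ heq
            have ho12 : o₁ = o₂ := congrArg Subtype.val heq1
            subst ho12
            have hg : g₁ = g₂ := by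
              funext x
              have h3 := congrFun heq2 ⟨x.1, lt_trans x.2 h₁⟩
              simp only [dif_pos x.2] at h3
              simpa using h3
            subst hg
            rfl
          refine step1.trans ?_
          rw [mk_prod, lift_id, lift_id, mk_arrow, lift_id, lift_id, mk_option, mk_out]
          have c1 : #({x : κ.ord.ToType // x < o}) ≤ b ^ m := by
            refine le_trans (cantor _).le ?_
            refine le_trans (power_le_power_right hb) ?_
            exact power_le_power_left hb0 (le_max_left _ _)
          have c2 : (b + 1) ^ #({x : κ.ord.ToType // x < o}) ≤ b ^ m := by
            have hb1 : b + 1 ≤ b * 2 := by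
              have : b + 1 ≤ b + b := by
                gcongr
                exact one_le_two.trans hb
              calc b + 1 ≤ b + b := this
                _ = b * 2 := by ring
            calc (b + 1) ^ #({x : κ.ord.ToType // x < o})
                ≤ (b * 2) ^ #({x : κ.ord.ToType // x < o}) := power_le_power_right hb1
              _ ≤ (b * 2) ^ m := power_le_power_left (mul_ne_zero hb0 two_ne_zero) (le_max_left _ _)
              _ = b ^ m * 2 ^ m := by rw [mul_power]
              _ ≤ b ^ m * b ^ m := by
                  gcongr
                  · exact power_le_power_right hb
              _ = b ^ (m + m) := by rw [power_add]
              _ = b ^ m := by rw [add_eq_self hminf]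
          calc #({x : κ.ord.ToType // x < o}) * (b + 1) ^ #({x : κ.ord.ToType // x < o})
              ≤ (b ^ m) * (b ^ m) := mul_le_mul' c1 c2
            _ = b ^ (m + m) := by rw [power_add]
            _ = b ^ m := by rw [add_eq_self hminf]
        calc #(N → {z : Z // z.1 < o}) = (#({z : Z // z.1 < o})) ^ ν := by
              rw [← power_def, mk_out]
          _ ≤ (b ^ m) ^ ν := power_le_power_right hinj
          _ = b ^ (m * ν) := by rw [← power_mul]
          _ ≤ B := le_powerlt _ (mul_lt_of_lt hκ hmκ hν)
      refine le_trans (sum_le_sum _ (fun _ : κ.ord.ToType => B) key) ?_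
      rw [sum_const', Cardinal.mk_ord_toType]
      rw [mul_eq_max hκ hBinf, max_eq_right hB]
    rw [hpow]
    exact le_trans (mk_le_of_surjective hΘs) hWle

lemma lemA {α κ : Cardinal.{u}} (hα : 2 ≤ α) (hκ : ℵ₀ ≤ κ) {ν : Cardinal.{u}} (hν : ν < κ) :
    ((α ^< κ) ^< κ) ^ ν ≤ (α ^< κ) ^< κ := by
  have h1κ : 1 < κ := one_lt_aleph0.trans_le hκ
  have hβ2 : 2 ≤ α ^< κ := hα.trans (le_self_powerlt α h1κ)
  by_cases hreg : κ.IsRegular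
  · exact powerlt_power_le_of_regular hreg hβ2 hν
  · set β := α ^< κ with hβ
    set c := κ.ord.cof with hc
    have hα0 : α ≠ 0 := by positivity
    have hcκ : c < κ := lt_of_le_of_ne (Ordinal.cof_ord_le κ) (fun e => hreg ⟨hκ, e.ge⟩)
    have hΔκ : β ^< κ ≤ α ^ κ := by
      rw [powerlt_le]
      intro ρ hρ
      have hβκ : β ≤ α ^ κ := by
        rw [hβ, powerlt_le]; intro σ hσ; exact power_le_power_left hα0 hσ.le
      calc β ^ ρ ≤ (α ^ κ) ^ ρ := power_le_power_right hβκ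
        _ = α ^ (κ * ρ) := by rw [power_mul]
        _ ≤ α ^ κ := power_le_power_left hα0 (by
            calc κ * ρ ≤ κ * κ := mul_le_mul' le_rfl hρ.le
              _ = κ := mul_eq_self hκ)
    have hκβc : α ^ κ ≤ β ^ c := by
      haveI : IsWellOrder κ.ord.ToType (· < ·) := isWellOrder_lt
      obtain ⟨S, hSub', hScard⟩ := Order.exists_cof_eq (α := κ.ord.ToType)
      have hSub : ∀ y, ∃ x ∈ S, ¬ x < y := fun y =>
        (hSub' y).imp fun x hx => ⟨hx.1, not_lt.mpr hx.2⟩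
      rw [Ordinal.cof_toType] at hScard
      have hcover : (univ : Set κ.ord.ToType) ⊆ ⋃ x : S, Iic x.1 := by
        intro y _
        obtain ⟨x, hxS, hxy⟩ := hSub y
        exact mem_iUnion.mpr ⟨⟨x, hxS⟩, not_lt.mp hxy⟩
      have hκsum : κ ≤ Cardinal.sum (fun x : S => #(Iic x.1)) := by
        calc κ = #κ.ord.ToType := (Cardinal.mk_ord_toType κ).symm
          _ = #(univ : Set κ.ord.ToType) := mk_univ.symm
          _ ≤ #(⋃ x : S, Iic x.1) := mk_le_mk_of_subset hcover
          _ ≤ Cardinal.sum (fun x : S => #(Iic x.1)) := mk_iUnion_le_sum_mk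
      have hIic : ∀ x : S, #(Iic x.1) < κ := by
        intro x
        have h1 : (Iic x.1 : Set κ.ord.ToType) ⊆ insert x.1 (Iio x.1) := by
          intro y hy
          rcases eq_or_lt_of_le (mem_Iic.mp hy) with h | h
          · exact Or.inl h
          · exact Or.inr h
        calc #(Iic x.1) ≤ #(insert x.1 (Iio x.1) : Set κ.ord.ToType) := mk_le_mk_of_subset h1
          _ ≤ #(Iio x.1) + 1 := mk_insert_le
          _ < κ := add_lt_of_lt hκ (Cardinal.mk_Iio_ord_toType x.1) h1κ
      calc α ^ κ ≤ α ^ Cardinal.sum (fun x : S => #(Iic x.1)) := power_le_power_left hα0 hκsum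
        _ = Cardinal.prod (fun x : S => α ^ #(Iic x.1)) := power_sum α _
        _ ≤ Cardinal.prod (fun _ : S => β) := prod_le_prod _ _ (fun x => le_powerlt α (hIic x))
        _ = β ^ #S := prod_const' _ _
        _ = β ^ c := by rw [hScard, hc]
    have hex : β ^< κ ≤ β ^ c := hΔκ.trans hκβc
    calc (β ^< κ) ^ ν ≤ (β ^ c) ^ ν := power_le_power_right hex
      _ = β ^ (c * ν) := by rw [power_mul]
      _ ≤ β ^< κ := le_powerlt β (mul_lt_of_lt hκ hcκ hν)

lemma lemB {α κ : Cardinal.{u}} (hα : 2 ≤ α) (hκ : ℵ₀ ≤ κ)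
    (h : κ.IsRegular ∨ ∃ ν < κ, α ^ ν = α ^< κ) : (α ^< κ) ^< κ = α ^< κ := by
  have h1κ : 1 < κ := one_lt_aleph0.trans_le hκ
  refine le_antisymm ?_ (le_self_powerlt _ h1κ)
  rw [powerlt_le]
  intro ρ hρ
  rcases h with hreg | ⟨ν0, hν0, hEq⟩
  · exact powerlt_power_le_of_regular hreg hα hρ
  · have h2 : (α ^< κ) ^ ρ = α ^ (ν0 * ρ) := by rw [← hEq, ← power_mul]
    rw [h2]
    exact le_powerlt α (mul_lt_of_lt hκ hν0 hρ)

lemma exists_dense_family {κ : Cardinal.{u}} {M L T : Type u} [Nonempty L] [Nonempty T]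
    (hκ : ℵ₀ ≤ κ) (e : M → (T → Bool)) (he : Function.Injective e) (hT : κ ≤ #T) :
    ∃ D : Set (M → L),
      (∀ s : Set M, #s < κ → ∀ p : M → L, ∃ d ∈ D, ∀ m ∈ s, d m = p m) ∧
      #D ≤ #({S : Set T // #S < κ} × {S : Set (T × T) // #S < κ} ×
        {S : Set (T × L) // #S < κ} × L) := by
  classical
  set Idx := {S : Set T // #S < κ} × {S : Set (T × T) // #S < κ} ×
    {S : Set (T × L) // #S < κ} × L with hIdx
  set F : Idx → (M → L) := fun q m =>
    if h : ∃ w : T × L, w ∈ q.2.2.1.1 ∧ ∀ t ∈ q.1.1, (e m t = true ↔ (w.1, t) ∈ q.2.1.1)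
    then h.choose.2 else q.2.2.2 with hF
  refine ⟨Set.range F, ?_, mk_range_le⟩
  intro s hs p
  obtain ⟨ι⟩ := (Cardinal.le_def ↥s T).mp (hs.le.trans hT)
  -- separation function
  set sep : ↥s × ↥s → T := fun z =>
    if h : ∃ t, e z.1.1 t ≠ e z.2.1 t then h.choose else Classical.arbitrary T with hsep
  have hsepspec : ∀ z : ↥s × ↥s, (z.1 : M) ≠ (z.2 : M) → e z.1.1 (sep z) ≠ e z.2.1 (sep z) := by
    intro z hne
    have hex : ∃ t, e z.1.1 t ≠ e z.2.1 t := by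
      by_contra hcon
      push_neg at hcon
      exact hne (he (funext hcon))
    rw [hsep]
    simp only [dif_pos hex]
    exact hex.choose_spec
  set E : Set T := Set.range sep with hE
  have hEcard : #E < κ := by
    refine lt_of_le_of_lt mk_range_le ?_
    simp only [mk_prod, lift_id]
    exact mul_lt_of_lt hκ hs hs
  set R : Set (T × T) :=
    (fun z : ↥s × ↥E => ((ι z.1 : T), (z.2 : T))) '' {z | e z.1.1 (z.2 : T) = true} with hR
  have hRcard : #R < κ := by
    refine lt_of_le_of_lt mk_image_le ?_
    refine lt_of_le_of_lt (mk_subtype_le _) ?_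
    simp only [mk_prod, lift_id]
    exact mul_lt_of_lt hκ hs hEcard
  have hRmem : ∀ (x : T) (t : T), (x, t) ∈ R ↔
      ∃ m : ↥s, ι m = x ∧ t ∈ E ∧ e m.1 t = true := by
    intro x t
    constructor
    · rintro ⟨⟨m, tE⟩, hz, heq⟩
      have h1 : ι m = x := congrArg Prod.fst heq
      have h2 : (tE : T) = t := congrArg Prod.snd heq
      subst h2
      exact ⟨m, h1, tE.2, hz⟩
    · rintro ⟨m, rfl, htE, hmt⟩
      exact ⟨(m, ⟨t, htE⟩), hmt, rfl⟩
  set V : Set (T × L) := Set.range (fun m : ↥s => ((ι m : T), p m.1)) with hV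
  have hVcard : #V < κ := lt_of_le_of_lt mk_range_le hs
  set q : Idx := (⟨E, hEcard⟩, ⟨R, hRcard⟩, ⟨V, hVcard⟩, Classical.arbitrary L) with hq
  refine ⟨F q, Set.mem_range_self q, ?_⟩
  intro m hm
  set m₀ : ↥s := ⟨m, hm⟩ with hm₀
  have hcond : ∃ w : T × L, w ∈ V ∧ ∀ t ∈ E, (e m t = true ↔ (w.1, t) ∈ R) := by
    refine ⟨(ι m₀, p m), Set.mem_range_self m₀, ?_⟩
    intro t htE
    rw [hRmem]
    constructor
    · intro hemt
      exact ⟨m₀, rfl, htE, hemt⟩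
    · rintro ⟨m', hι, -, hm't⟩
      have h3 : m' = m₀ := ι.injective hι
      rw [h3] at hm't
      exact hm't
  have hFq : F q m = hcond.choose.2 := by
    rw [hF]
    simp only [hq]
    rw [dif_pos hcond]
  obtain ⟨hwV, hwprop⟩ := hcond.choose_spec
  obtain ⟨m', hm'⟩ := hwV
  -- m' and m₀ have the same trace on E
  have htrace : ∀ t ∈ E, e m t = e m'.1 t := by
    intro t htE
    have h1 := hwprop t htE
    rw [← hm'] at h1
    simp only at h1
    rw [hRmem] at h1
    have h2 : e m t = true ↔ e m'.1 t = true := by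
      rw [h1]
      constructor
      · rintro ⟨m'', hι, -, hm''⟩
        rwa [ι.injective hι] at hm''
      · intro hm't
        exact ⟨m', rfl, htE, hm't⟩
    rcases Bool.dichotomy (e m t) with h | h <;> rcases Bool.dichotomy (e m'.1 t) with h' | h' <;>
      simp [h, h'] at h2 ⊢
  have hmm' : (m'.1 : M) = m := by
    by_contra hne
    have hne' : (m₀ : M) ≠ (m' : M) := fun hc => hne hc.symm
    exact hsepspec (m₀, m') hne' (htrace (sep (m₀, m')) (Set.mem_range_self _))
  have hlast : hcond.choose.2 = p m := by
    rw [← hm']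
    show p m'.1 = p m
    rw [hmm']
  rw [hFq, hlast]

end Stmt10Aux

open Stmt10Aux

theorem stmt10 (α κ lam μ : Cardinal.{u}) (hα : 2 ≤ α) (hκ : ℵ₀ ≤ κ)
    (hlam1 : α ≤ lam) (hlam2 : lam ≤ (α ^< κ) ^< κ)
    (hμ1 : κ ≤ μ) (hμ2 : μ ≤ 2 ^ ((α ^< κ) ^< κ))
    (L M : Type u) [TopologicalSpace L] [DiscreteTopology L]
    (hL : #L = lam) (hM : #M = μ) :
    (α ^< κ ≤ @dens (∀ _ : M, L) (boxTopology κ fun _ => L) ∧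
      @dens (∀ _ : M, L) (boxTopology κ fun _ => L) ≤ (α ^< κ) ^< κ) ∧
    ((κ.IsRegular ∨ ∃ ν < κ, α ^ ν = α ^< κ) →
      @dens (∀ _ : M, L) (boxTopology κ fun _ => L) = α ^< κ) := by
  classical
  have h1κ : 1 < κ := one_lt_aleph0.trans_le hκ
  have hκ0 : (0 : Cardinal) < κ := zero_lt_one.trans h1κ
  have hβ2 : 2 ≤ α ^< κ := hα.trans (le_self_powerlt α h1κ)
  have hκβ : κ ≤ α ^< κ := kappa_le_powerlt hα hκ
  have hβΔ : α ^< κ ≤ (α ^< κ) ^< κ := le_self_powerlt _ h1κ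
  have hκΔ : κ ≤ (α ^< κ) ^< κ := hκβ.trans hβΔ
  have hΔinf : ℵ₀ ≤ (α ^< κ) ^< κ := hκ.trans hκΔ
  have hLne : Nonempty L := by
    rw [← mk_ne_zero_iff, hL]
    exact ne_of_gt (lt_of_lt_of_le (by norm_num) (hα.trans hlam1))
  letI tX : TopologicalSpace (∀ _ : M, L) := boxTopology κ fun _ => L
  set 𝒮 : Set (Set (∀ _ : M, L)) :=
    {S | ∃ U : ∀ _ : M, Set L, (∀ i, IsOpen (U i)) ∧ #{i | U i ≠ Set.univ} < κ ∧
      S = Set.pi Set.univ U} with h𝒮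
  have htop : tX = generateFrom 𝒮 := rfl
  -- finite intersections of boxes are boxes
  have hsInter : ∀ f : Set (Set (∀ _ : M, L)), f.Finite → f ⊆ 𝒮 → ⋂₀ f ∈ 𝒮 := by
    intro f hfin
    refine Set.Finite.induction_on f hfin ?_ ?_
    · intro _
      refine ⟨fun _ => univ, fun _ => isOpen_univ, ?_, by rw [sInter_empty, pi_univ]⟩
      have h0 : {i : M | (univ : Set L) ≠ Set.univ} = ∅ := by simp
      rw [h0, mk_emptyCollection]
      exact hκ0
    · intro a f' _ _ IH hsub
      obtain ⟨U₁, hU₁o, hU₁s, hU₁e⟩ := hsub (mem_insert a f')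
      obtain ⟨U₂, hU₂o, hU₂s, hU₂e⟩ := IH ((subset_insert a f').trans hsub)
      refine ⟨fun i => U₁ i ∩ U₂ i, fun i => (hU₁o i).inter (hU₂o i), ?_, ?_⟩
      · have hsub2 : {i | U₁ i ∩ U₂ i ≠ Set.univ} ⊆
            {i | U₁ i ≠ Set.univ} ∪ {i | U₂ i ≠ Set.univ} := by
          intro i hi
          by_contra hcon
          simp only [mem_union, mem_setOf_eq, not_or, not_not] at hcon
          exact hi (by rw [hcon.1, hcon.2, univ_inter])
        refine lt_of_le_of_lt (mk_le_mk_of_subset hsub2) ?_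
        refine lt_of_le_of_lt (mk_union_le _ _) ?_
        exact add_lt_of_lt hκ hU₁s hU₂s
      · rw [sInter_insert, hU₁e, hU₂e, ← pi_inter_distrib]
  -- dense if realizes all small partial functions
  have dense_of_partial : ∀ D : Set (∀ _ : M, L),
      (∀ s : Set M, #s < κ → ∀ p : ∀ _ : M, L, ∃ d ∈ D, ∀ m ∈ s, d m = p m) →
      Dense D := by
    intro D hD
    have hbasis := TopologicalSpace.isTopologicalBasis_of_subbasis htop
    rw [hbasis.dense_iff]
    rintro o ⟨f, ⟨hfin, hsub⟩, rfl⟩ hne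
    obtain ⟨U, hUo, hUs, hUe⟩ := hsInter f hfin hsub
    obtain ⟨x, hx⟩ := hne
    obtain ⟨d, hdD, hd⟩ := hD {i | U i ≠ Set.univ} hUs x
    refine ⟨d, ?_, hdD⟩
    have hx' : x ∈ ⋂₀ f := hx
    show d ∈ ⋂₀ f
    rw [hUe] at hx' ⊢
    rw [mem_univ_pi] at hx' ⊢
    intro i
    by_cases hi : U i = Set.univ
    · rw [hi]; trivial
    · rw [hd i hi]; exact hx' i
  -- dense sets meet nonempty boxes
  have dense_meets_box : ∀ D : Set (∀ _ : M, L), Dense D → ∀ B ∈ 𝒮, B.Nonempty →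
      (B ∩ D).Nonempty := by
    intro D hDense B hB hBne
    have hBopen : IsOpen B := by
      rw [htop]
      exact TopologicalSpace.isOpen_generateFrom_of_mem hB
    exact hDense.inter_open_nonempty B hBopen hBne
  -- lower bound
  have hlower : ∀ D : Set (∀ _ : M, L), Dense D → ∀ ν, ν < κ → α ^ ν ≤ #D := by
    intro D hDense ν hν
    obtain ⟨ιM⟩ := (Cardinal.le_def (Quotient.out ν) M).mp
      (by rw [mk_out, hM]; exact (hν.le.trans hμ1))
    obtain ⟨jL⟩ := (Cardinal.le_def (Quotient.out α) L).mp
      (by rw [mk_out, hL]; exact hlam1)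
    set Bg : (Quotient.out ν → Quotient.out α) → Set (∀ _ : M, L) :=
      fun g => {x | ∀ i, x (ιM i) = jL (g i)} with hBg
    have hBg𝒮 : ∀ g, Bg g ∈ 𝒮 := by
      intro g
      refine ⟨fun m => {y | ∀ i, ιM i = m → y = jL (g i)}, fun _ => isOpen_discrete _, ?_, ?_⟩
      · have hsub : {m | {y | ∀ i, ιM i = m → y = jL (g i)} ≠ Set.univ} ⊆ Set.range ιM := by
          intro m hm
          by_contra hnr
          apply hm
          ext y
          simp only [mem_setOf_eq, mem_univ, iff_true]
          intro i hi
          exact absurd ⟨i, hi⟩ hnr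
        refine lt_of_le_of_lt (mk_le_mk_of_subset hsub) (lt_of_le_of_lt mk_range_le ?_)
        rw [mk_out]
        exact hν
      · ext x
        simp only [hBg, mem_setOf_eq, mem_pi, mem_univ, forall_true_left]
        constructor
        · intro h m i him
          rw [← him]
          exact h i
        · intro h i
          exact h (ιM i) i rfl
    have hBgne : ∀ g, (Bg g).Nonempty := by
      intro g
      refine ⟨fun m => if h : ∃ i, ιM i = m then jL (g h.choose) else Classical.arbitrary L, ?_⟩
      intro i
      have hex : ∃ i', ιM i' = ιM i := ⟨i, rfl⟩
      simp only [dif_pos hex]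
      congr 1
      congr 1
      exact ιM.injective hex.choose_spec
    have hwit : ∀ g, ∃ d, d ∈ D ∧ d ∈ Bg g := by
      intro g
      obtain ⟨d, hd1, hd2⟩ := dense_meets_box D hDense (Bg g) (hBg𝒮 g) (hBgne g)
      exact ⟨d, hd2, hd1⟩
    choose w hwD hwB using hwit
    have hwinj : Function.Injective fun g => (⟨w g, hwD g⟩ : ↥D) := by
      intro g g' hgg
      have hww : w g = w g' := congrArg Subtype.val hgg
      funext i
      apply jL.injective
      rw [← hwB g i, ← hwB g' i, hww]
    calc α ^ ν = #(Quotient.out ν → Quotient.out α) := by rw [← power_def, mk_out, mk_out]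
      _ ≤ #D := mk_le_of_injective hwinj
  have hdens_lower : α ^< κ ≤ dens (∀ _ : M, L) := by
    refine le_csInf ⟨#(univ : Set (∀ _ : M, L)), univ, dense_univ, rfl⟩ ?_
    rintro c ⟨D, hD, rfl⟩
    rw [powerlt_le]
    intro ν hν
    exact hlower D hD ν hν
  -- upper bound
  have hΔν : ∀ ν, ν < κ → ((α ^< κ) ^< κ) ^ ν ≤ (α ^< κ) ^< κ := fun ν hν => lemA hα hκ hν
  have hupper : dens (∀ _ : M, L) ≤ (α ^< κ) ^< κ := by
    set T := Quotient.out ((α ^< κ) ^< κ) with hT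
    have hTmk : #T = (α ^< κ) ^< κ := mk_out _
    have hTne : Nonempty T := by
      rw [← mk_ne_zero_iff, hTmk]
      exact ne_of_gt (lt_of_lt_of_le aleph0_pos hΔinf)
    obtain ⟨eM⟩ := (Cardinal.le_def M (T → Bool)).mp
      (by
        rw [hM]
        refine hμ2.trans (le_of_eq ?_)
        rw [mk_arrow, hTmk]
        simp)
    obtain ⟨D, hDd, hDc⟩ := exists_dense_family (κ := κ) (M := M) (L := L) (T := T) hκ
      (fun m => eM m) eM.injective (by rw [hTmk]; exact hκΔ)
    have hsmall : ∀ K : Type u, #K ≤ (α ^< κ) ^< κ → #{S : Set K // #S < κ} ≤ (α ^< κ) ^< κ := by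
      intro K hK
      refine le_trans (mk_small_subsets_le hκ K) ?_
      have h1 : (#K) ^< κ ≤ (α ^< κ) ^< κ := by
        rw [powerlt_le]
        intro ν hν
        exact (power_le_power_right hK).trans (hΔν ν hν)
      calc κ * ((#K) ^< κ) + 1 ≤ ((α ^< κ) ^< κ) * ((α ^< κ) ^< κ) + 1 :=
            add_le_add (mul_le_mul' hκΔ h1) le_rfl
        _ = (α ^< κ) ^< κ + 1 := by rw [mul_eq_self hΔinf]
        _ = (α ^< κ) ^< κ := add_one_eq hΔinf
    have hmkTT : #(T × T) ≤ (α ^< κ) ^< κ := by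
      simp only [mk_prod, lift_id, hTmk]
      rw [mul_eq_self hΔinf]
    have hmkTL : #(T × L) ≤ (α ^< κ) ^< κ := by
      simp only [mk_prod, lift_id, hTmk, hL]
      calc ((α ^< κ) ^< κ) * lam ≤ ((α ^< κ) ^< κ) * ((α ^< κ) ^< κ) := by gcongr
        _ = (α ^< κ) ^< κ := mul_eq_self hΔinf
    have hIdx : #({S : Set T // #S < κ} × {S : Set (T × T) // #S < κ} ×
        {S : Set (T × L) // #S < κ} × L) ≤ (α ^< κ) ^< κ := by
      simp only [mk_prod, lift_id]
      have b1 := hsmall T (le_of_eq hTmk)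
      have b2 := hsmall (T × T) hmkTT
      have b3 := hsmall (T × L) hmkTL
      have b4 : #L ≤ (α ^< κ) ^< κ := by rw [hL]; exact hlam2
      calc #{S : Set T // #S < κ} * (#{S : Set (T × T) // #S < κ} *
            (#{S : Set (T × L) // #S < κ} * #L))
          ≤ ((α ^< κ) ^< κ) * (((α ^< κ) ^< κ) * (((α ^< κ) ^< κ) * ((α ^< κ) ^< κ))) := by
            gcongr
        _ = (α ^< κ) ^< κ := by rw [mul_eq_self hΔinf, mul_eq_self hΔinf, mul_eq_self hΔinf]
    have hDense : Dense D := dense_of_partial D hDd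
    exact le_trans (csInf_le (OrderBot.bddBelow _) ⟨D, hDense, rfl⟩) (hDc.trans hIdx)
  refine ⟨⟨hdens_lower, hupper⟩, ?_⟩
  intro h
  have hΔβ := lemB hα hκ h
  exact le_antisymm (hupper.trans_eq hΔβ) hdens_lower
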